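/- arXiv:2404.13730 — 4 statements merged into one kernel-verified Lean document; each statement's English description precedes it below -/
import Mathlib

section
/- Let 0 < γ < 1/2 and u₀ ∈ (0,1). Then for every k ≥ 1, the iterated integral ∫₀¹ du₁ ⋯ ∫₀¹ du_k ∏_{j=1}^k (u_{j-1} ∧ u_j)^{-γ} is at most ((2-γ)/(1-γ)) · (1/(1-2γ) + 1/(1-γ))^{k-1} · u₀^{-γ}. -/
open MeasureTheory

noncomputable def Pf (γ a : ℝ) (k : ℕ) (u : Fin k → ℝ) : ℝ :=
  ∏ j : Fin k,
    (min (if j.val = 0 then a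
          else u ⟨j.val - 1, lt_of_le_of_lt (Nat.sub_le _ _) j.isLt⟩) (u j)) ^ (-γ)

lemma measurable_Pf (γ a : ℝ) (k : ℕ) : Measurable (Pf γ a k) := by
  unfold Pf
  refine Finset.measurable_prod _ fun j _ => ?_
  split_ifs with h
  · fun_prop
  · fun_prop

lemma Pf_cons (γ a t : ℝ) (k : ℕ) (v : Fin k → ℝ) :
    Pf γ a (k+1) (Fin.cons t v) = (min a t) ^ (-γ) * Pf γ t k v := by
  unfold Pf
  rw [Fin.prod_univ_succ]
  congr 1
  refine Finset.prod_congr rfl fun j _ => ?_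
  simp only [Fin.val_succ, Nat.succ_ne_zero, if_false, Fin.cons_succ, Nat.add_sub_cancel]
  congr 2
  rcases j with ⟨jv, hj⟩
  cases jv with
  | zero => simp
  | succ m =>
    simp only [Fin.val_mk, Nat.succ_ne_zero, if_false, Nat.add_sub_cancel]
    exact @Fin.cons_succ k (fun _ => ℝ) t v ⟨m, by omega⟩


lemma lint_min (γ δ : ℝ) (hγ0 : 0 < γ) (hδ : 0 ≤ δ) (h1 : γ + δ < 1)
    (a : ℝ) (ha : a ∈ Set.Ioc (0:ℝ) 1) :
    ∫⁻ t in Set.Ioc (0:ℝ) 1, ENNReal.ofReal (min a t ^ (-γ) * t ^ (-δ))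
      ≤ ENNReal.ofReal ((1/(1-γ-δ) + 1/(1-δ)) * a ^ (-γ)) := by
  obtain ⟨ha0, ha1⟩ := ha
  have hγδ : (0:ℝ) < 1 - γ - δ := by linarith
  have hδ1 : (0:ℝ) < 1 - δ := by linarith
  have hsplit : Set.Ioc (0:ℝ) 1 = Set.Ioc 0 a ∪ Set.Ioc a 1 :=
    (Set.Ioc_union_Ioc_eq_Ioc ha0.le ha1).symm
  rw [hsplit, lintegral_union measurableSet_Ioc (Set.Ioc_disjoint_Ioc_of_le le_rfl)]
  have hI1 : ∫⁻ t in Set.Ioc (0:ℝ) a, ENNReal.ofReal (min a t ^ (-γ) * t ^ (-δ))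
      ≤ ENNReal.ofReal (1/(1-γ-δ) * a ^ (-γ)) := by
    have hcong : ∫⁻ t in Set.Ioc (0:ℝ) a, ENNReal.ofReal (min a t ^ (-γ) * t ^ (-δ))
        = ∫⁻ t in Set.Ioc (0:ℝ) a, ENNReal.ofReal (t ^ (-(γ+δ))) := by
      refine setLIntegral_congr_fun measurableSet_Ioc (fun t ht => ?_)
      have h1 : min a t = t := min_eq_right ht.2
      rw [h1, ← Real.rpow_add ht.1]
      ring_nf
    rw [hcong]
    have hint : IntegrableOn (fun t : ℝ => t ^ (-(γ+δ))) (Set.Ioc 0 a) := by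
      have := intervalIntegral.intervalIntegrable_rpow' (a := 0) (b := a) (r := -(γ+δ))
        (by linarith)
      rwa [intervalIntegrable_iff_integrableOn_Ioc_of_le ha0.le] at this
    rw [← ofReal_integral_eq_lintegral_ofReal hint]
    · apply ENNReal.ofReal_le_ofReal
      have hval : ∫ t in Set.Ioc (0:ℝ) a, t ^ (-(γ+δ)) = a ^ (1-γ-δ) / (1-γ-δ) := by
        rw [← intervalIntegral.integral_of_le ha0.le,
          integral_rpow (Or.inl (by linarith))]
        rw [Real.zero_rpow (by linarith)]
        norm_num
        ring_nf
      rw [hval]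
      have : a ^ (1-γ-δ) ≤ a ^ (-γ) :=
        Real.rpow_le_rpow_of_exponent_ge ha0 ha1 (by linarith)
      rw [div_eq_mul_inv, one_div, mul_comm]
      exact mul_le_mul_of_nonneg_left this (by positivity)
    · filter_upwards [ae_restrict_mem measurableSet_Ioc] with t ht
      exact Real.rpow_nonneg ht.1.le _
  have hI2 : ∫⁻ t in Set.Ioc a 1, ENNReal.ofReal (min a t ^ (-γ) * t ^ (-δ))
      ≤ ENNReal.ofReal (1/(1-δ) * a ^ (-γ)) := by
    have hcong : ∫⁻ t in Set.Ioc a 1, ENNReal.ofReal (min a t ^ (-γ) * t ^ (-δ))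
        = ∫⁻ t in Set.Ioc a 1, ENNReal.ofReal (a ^ (-γ) * t ^ (-δ)) := by
      refine setLIntegral_congr_fun measurableSet_Ioc (fun t ht => ?_)
      rw [min_eq_left ht.1.le]
    rw [hcong]
    have hint : IntegrableOn (fun t : ℝ => a ^ (-γ) * t ^ (-δ)) (Set.Ioc a 1) := by
      apply Integrable.const_mul
      have := intervalIntegral.intervalIntegrable_rpow' (a := a) (b := 1) (r := -δ)
        (by linarith)
      rwa [intervalIntegrable_iff_integrableOn_Ioc_of_le ha1] at this
    rw [← ofReal_integral_eq_lintegral_ofReal hint]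
    · apply ENNReal.ofReal_le_ofReal
      rw [integral_const_mul]
      have hval : ∫ t in Set.Ioc a 1, t ^ (-δ) = (1 - a ^ (1-δ)) / (1-δ) := by
        rw [← intervalIntegral.integral_of_le ha1,
          integral_rpow (Or.inl (by linarith))]
        rw [Real.one_rpow]
        ring_nf
      rw [hval, mul_comm]
      apply mul_le_mul_of_nonneg_right _ (Real.rpow_nonneg ha0.le _)
      rw [div_le_div_iff₀ hδ1 hδ1]
      have : 0 ≤ a ^ (1-δ) := Real.rpow_nonneg ha0.le _
      nlinarith
    · filter_upwards [ae_restrict_mem measurableSet_Ioc] with t ht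
      have : (0:ℝ) < t := lt_trans ha0 ht.1
      positivity
  calc _ ≤ ENNReal.ofReal (1/(1-γ-δ) * a ^ (-γ)) + ENNReal.ofReal (1/(1-δ) * a ^ (-γ)) :=
        add_le_add hI1 hI2
    _ = ENNReal.ofReal ((1/(1-γ-δ) + 1/(1-δ)) * a ^ (-γ)) := by
        rw [← ENNReal.ofReal_add (by positivity) (by positivity)]
        ring_nf

lemma key (γ : ℝ) (hγ0 : 0 < γ) (hγ : γ < 1/2) (k : ℕ) :
    ∀ a ∈ Set.Ioc (0:ℝ) 1,
      ∫⁻ u, ENNReal.ofReal (Pf γ a (k+1) u)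
          ∂(Measure.pi fun _ : Fin (k+1) => volume.restrict (Set.Ioc 0 1))
        ≤ ENNReal.ofReal ((2-γ)/(1-γ) * (1/(1-2*γ)+1/(1-γ))^k * a ^ (-γ)) := by
  have h1γ : (0:ℝ) < 1 - γ := by linarith
  have h2γ : (0:ℝ) < 1 - 2*γ := by linarith
  induction k with
  | zero =>
    intro a ha
    have hPf1 : ∀ u : Fin 1 → ℝ, Pf γ a 1 u = (min a (u 0)) ^ (-γ) := by
      intro u; unfold Pf; rw [Fin.prod_univ_one]; simp
    simp only [hPf1]
    have pres := measurePreserving_funUnique (volume.restrict (Set.Ioc (0:ℝ) 1)) (Fin 1)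
    have hmeas : Measurable fun t : ℝ => ENNReal.ofReal ((min a t) ^ (-γ)) := by fun_prop
    have heq : ∫⁻ u : Fin 1 → ℝ, ENNReal.ofReal ((min a (u 0)) ^ (-γ))
          ∂(Measure.pi fun _ : Fin 1 => volume.restrict (Set.Ioc 0 1))
        = ∫⁻ t in Set.Ioc (0:ℝ) 1, ENNReal.ofReal ((min a t) ^ (-γ)) :=
      pres.lintegral_comp hmeas
    rw [heq]
    have hbd := lint_min γ 0 hγ0 le_rfl (by linarith) a ha
    simp only [neg_zero, Real.rpow_zero, mul_one] at hbd
    refine le_trans hbd (ENNReal.ofReal_le_ofReal (le_of_eq ?_))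
    rw [pow_zero, mul_one]
    have : 1/(1-γ-0) + 1/(1-0) = (2-γ)/(1-γ) := by
      rw [sub_zero, sub_zero]
      field_simp
      ring
    rw [this]
  | succ k ih =>
    intro a ha
    haveI : SigmaFinite ((volume : Measure ℝ).restrict (Set.Ioc 0 1)) := inferInstance
    set ρ : Measure ℝ := volume.restrict (Set.Ioc 0 1) with hρ
    set e := MeasurableEquiv.piFinSuccAbove (fun _ : Fin (k+1+1) => ℝ) 0 with he
    have pres := measurePreserving_piFinSuccAbove (fun _ : Fin (k+1+1) => ρ) 0
    have hF : Measurable fun u : Fin (k+1+1) → ℝ => ENNReal.ofReal (Pf γ a (k+1+1) u) :=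
      (measurable_Pf γ a _).ennreal_ofReal
    have hg : Measurable fun p : ℝ × (Fin (k+1) → ℝ) =>
        ENNReal.ofReal (Pf γ a (k+1+1) (e.symm p)) := hF.comp e.symm.measurable
    have h1 : ∫⁻ u, ENNReal.ofReal (Pf γ a (k+1+1) u)
          ∂(Measure.pi fun _ : Fin (k+1+1) => ρ)
        = ∫⁻ p, ENNReal.ofReal (Pf γ a (k+1+1) (e.symm p))
            ∂(ρ.prod (Measure.pi fun _ : Fin (k+1) => ρ)) := by
      rw [← pres.lintegral_comp hg]
      simp only [he, MeasurableEquiv.symm_apply_apply]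
    rw [h1, lintegral_prod _ hg.aemeasurable]
    have hsymm : ∀ (t : ℝ) (v : Fin (k+1) → ℝ), e.symm (t, v) = Fin.cons t v := by
      intro t v
      rw [he, MeasurableEquiv.piFinSuccAbove_symm_apply]
      exact Fin.insertNth_zero' t v
    have hinner : ∀ᵐ t ∂ρ,
        (∫⁻ v, ENNReal.ofReal (Pf γ a (k+1+1) (e.symm (t, v)))
            ∂(Measure.pi fun _ : Fin (k+1) => ρ))
          ≤ ENNReal.ofReal ((min a t) ^ (-γ) * t ^ (-γ)) *
              ENNReal.ofReal ((2-γ)/(1-γ) * (1/(1-2*γ)+1/(1-γ))^k) := by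
      rw [hρ]
      filter_upwards [ae_restrict_mem measurableSet_Ioc] with t ht
      have ht0 : (0:ℝ) < t := ht.1
      have hmin : (0:ℝ) ≤ min a t := le_min ha.1.le ht0.le
      calc (∫⁻ v, ENNReal.ofReal (Pf γ a (k+1+1) (e.symm (t, v)))
              ∂(Measure.pi fun _ : Fin (k+1) => ρ))
          = ∫⁻ v, ENNReal.ofReal ((min a t) ^ (-γ)) * ENNReal.ofReal (Pf γ t (k+1) v)
              ∂(Measure.pi fun _ : Fin (k+1) => ρ) := by
            refine lintegral_congr fun v => ?_
            rw [hsymm, Pf_cons, ENNReal.ofReal_mul (Real.rpow_nonneg hmin _)]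
        _ = ENNReal.ofReal ((min a t) ^ (-γ)) *
              ∫⁻ v, ENNReal.ofReal (Pf γ t (k+1) v) ∂(Measure.pi fun _ : Fin (k+1) => ρ) :=
            lintegral_const_mul _ (measurable_Pf γ t _).ennreal_ofReal
        _ ≤ ENNReal.ofReal ((min a t) ^ (-γ)) *
              ENNReal.ofReal ((2-γ)/(1-γ) * (1/(1-2*γ)+1/(1-γ))^k * t ^ (-γ)) := by
            gcongr
            exact ih t ht
        _ = ENNReal.ofReal ((min a t) ^ (-γ) * t ^ (-γ)) *
              ENNReal.ofReal ((2-γ)/(1-γ) * (1/(1-2*γ)+1/(1-γ))^k) := by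
            rw [← ENNReal.ofReal_mul (Real.rpow_nonneg hmin _),
              ← ENNReal.ofReal_mul (by positivity)]
            ring_nf
    calc (∫⁻ t, (∫⁻ v, ENNReal.ofReal (Pf γ a (k+1+1) (e.symm (t, v)))
            ∂(Measure.pi fun _ : Fin (k+1) => ρ)) ∂ρ)
        ≤ ∫⁻ t, ENNReal.ofReal ((min a t) ^ (-γ) * t ^ (-γ)) *
            ENNReal.ofReal ((2-γ)/(1-γ) * (1/(1-2*γ)+1/(1-γ))^k) ∂ρ :=
          lintegral_mono_ae hinner
      _ = (∫⁻ t, ENNReal.ofReal ((min a t) ^ (-γ) * t ^ (-γ)) ∂ρ) *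
            ENNReal.ofReal ((2-γ)/(1-γ) * (1/(1-2*γ)+1/(1-γ))^k) :=
          lintegral_mul_const _ (by fun_prop)
      _ ≤ ENNReal.ofReal ((1/(1-γ-γ) + 1/(1-γ)) * a ^ (-γ)) *
            ENNReal.ofReal ((2-γ)/(1-γ) * (1/(1-2*γ)+1/(1-γ))^k) := by
          gcongr
          exact lint_min γ γ hγ0 hγ0.le (by linarith) a ha
      _ ≤ ENNReal.ofReal ((2-γ)/(1-γ) * (1/(1-2*γ)+1/(1-γ))^(k+1) * a ^ (-γ)) := by
          have hnn : (0:ℝ) ≤ (1/(1-γ-γ) + 1/(1-γ)) * a ^ (-γ) := by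
            have hgg : (0:ℝ) < 1-γ-γ := by linarith
            have hra : (0:ℝ) ≤ a ^ (-γ) := Real.rpow_nonneg ha.1.le _
            positivity
          rw [← ENNReal.ofReal_mul hnn]
          refine ENNReal.ofReal_le_ofReal (le_of_eq ?_)
          have h12 : 1-γ-γ = 1-2*γ := by ring
          rw [h12, pow_succ]
          ring

lemma restrict_pi_Ioc (k : ℕ) :
    (volume : Measure (Fin k → ℝ)).restrict (Set.univ.pi fun _ => Set.Ioc (0:ℝ) 1)
      = Measure.pi fun _ : Fin k => volume.restrict (Set.Ioc 0 1) := by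
  refine (Measure.pi_eq (μ := fun _ : Fin k => (volume : Measure ℝ).restrict (Set.Ioc 0 1)) fun s hs => ?_).symm
  rw [Measure.restrict_apply (MeasurableSet.univ_pi hs), ← Set.pi_inter_distrib, volume_pi,
    Measure.pi_pi]
  exact Finset.prod_congr rfl fun i _ =>
    (Measure.restrict_apply (hs i)).symm

/-- For 0 < γ < 1/2 and u₀ ∈ (0,1), for every k ≥ 1 the iterated integral
∫₀¹ du₁ ⋯ ∫₀¹ du_k ∏_{j=1}^k (u_{j-1} ∧ u_j)^{-γ}
is at most ((2-γ)/(1-γ)) (1/(1-2γ)+1/(1-γ))^{k-1} u₀^{-γ}. -/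
theorem whole_path_mark_integral_bound (γ : ℝ) (hγ0 : 0 < γ) (hγ : γ < 1/2)
    (u₀ : ℝ) (hu₀ : u₀ ∈ Set.Ioo (0:ℝ) 1) (k : ℕ) (hk : 1 ≤ k) :
    (∫ u : Fin k → ℝ in Set.univ.pi fun _ : Fin k => Set.Ioc (0:ℝ) 1,
      ∏ j : Fin k,
        (min (if j.val = 0 then u₀
              else u ⟨j.val - 1, lt_of_le_of_lt (Nat.sub_le _ _) j.isLt⟩) (u j)) ^ (-γ))
      ≤ ((2 - γ) / (1 - γ)) * (1/(1-2*γ) + 1/(1-γ)) ^ (k-1) * u₀ ^ (-γ) := by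
  obtain ⟨m, rfl⟩ : ∃ m, k = m + 1 := ⟨k - 1, (Nat.succ_pred_eq_of_pos hk).symm⟩
  have hIoc : u₀ ∈ Set.Ioc (0:ℝ) 1 := ⟨hu₀.1, hu₀.2.le⟩
  have h1γ : (0:ℝ) < 1 - γ := by linarith
  have h2γ : (0:ℝ) < 1 - 2*γ := by linarith
  show (∫ u : Fin (m+1) → ℝ in Set.univ.pi fun _ => Set.Ioc (0:ℝ) 1, Pf γ u₀ (m+1) u) ≤ _
  rw [restrict_pi_Ioc]
  have hae : 0 ≤ᵐ[Measure.pi fun _ : Fin (m+1) => (volume : Measure ℝ).restrict (Set.Ioc 0 1)]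
      Pf γ u₀ (m+1) := by
    set μ := Measure.pi fun _ : Fin (m+1) => (volume : Measure ℝ).restrict (Set.Ioc 0 1)
      with hμ
    have hT : MeasurableSet (Set.univ.pi fun _ : Fin (m+1) => Set.Ioc (0:ℝ) 1) :=
      MeasurableSet.univ_pi fun _ => measurableSet_Ioc
    have hmem : ∀ᵐ u ∂μ, u ∈ Set.univ.pi fun _ : Fin (m+1) => Set.Ioc (0:ℝ) 1 := by
      refine MeasureTheory.ae_iff.mpr ?_
      have hTs : μ (Set.univ.pi fun _ : Fin (m+1) => Set.Ioc (0:ℝ) 1) = 1 := by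
        rw [hμ, Measure.pi_pi]
        simp
      have huniv : μ Set.univ = 1 := by
        rw [hμ, Measure.pi_univ]
        simp
      have hc : μ (Set.univ.pi fun _ : Fin (m+1) => Set.Ioc (0:ℝ) 1)ᶜ = 0 := by
        rw [measure_compl hT (by rw [hTs]; exact ENNReal.one_ne_top), hTs, huniv, tsub_self]
      exact hc
    filter_upwards [hmem] with u hu
    have hu' := Set.mem_univ_pi.mp hu
    unfold Pf
    refine Finset.prod_nonneg fun j _ => Real.rpow_nonneg (le_min ?_ (hu' j).1.le) _
    split_ifs with h
    · exact hu₀.1.le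
    · exact (hu' _).1.le
  rw [integral_eq_lintegral_of_nonneg_ae hae (measurable_Pf γ u₀ _).aestronglyMeasurable]
  have hB : (0:ℝ) ≤ (2-γ)/(1-γ) * (1/(1-2*γ)+1/(1-γ))^(m+1-1) * u₀ ^ (-γ) := by
    have hru : (0:ℝ) ≤ u₀ ^ (-γ) := Real.rpow_nonneg hu₀.1.le _
    have c1 : (0:ℝ) ≤ 1/(1-2*γ) := one_div_nonneg.mpr h2γ.le
    have c2 : (0:ℝ) ≤ 1/(1-γ) := one_div_nonneg.mpr h1γ.le
    exact mul_nonneg (mul_nonneg (div_nonneg (by linarith) h1γ.le)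
      (pow_nonneg (add_nonneg c1 c2) _)) hru
  refine ENNReal.toReal_le_of_le_ofReal hB ?_
  have hkey := key γ hγ0 hγ m u₀ hIoc
  simpa using hkey
end

section
/- Let 0 < γ < 1/2 and u₀ ∈ (0,1). Then for every k ≥ 1, the iterated integral ∫₀¹ du₁ ⋯ ∫₀¹ du_k (∏_{j=1}^k (u_{j-1} ∧ u_j)^{-γ}) · u_k^{-γ} is at most (1/(1-2γ) + 1/(1-γ))^{k} · u₀^{-γ}. -/
open MeasureTheory

noncomputable def chainP (γ : ℝ) : (n : ℕ) → ℝ → (Fin n → ℝ) → ℝ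
  | 0, a, _ => a ^ (-γ)
  | (n+1), a, u => (min a (u 0)) ^ (-γ) * chainP γ n (u 0) (fun j => u j.succ)

lemma chainP_measurable (γ : ℝ) (n : ℕ) :
    Measurable (fun p : ℝ × (Fin n → ℝ) => chainP γ n p.1 p.2) := by
  induction n with
  | zero => exact measurable_fst.pow_const (-γ)
  | succ n ih =>
    simp only [chainP]
    have h1 : Measurable (fun p : ℝ × (Fin (n+1) → ℝ) =>
        ((p.2 0, fun j : Fin n => p.2 j.succ) : ℝ × (Fin n → ℝ))) :=
      ((measurable_pi_apply 0).comp measurable_snd).prodMk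
        (measurable_pi_lambda _ fun j => (measurable_pi_apply j.succ).comp measurable_snd)
    have h2 : Measurable (fun p : ℝ × (Fin (n+1) → ℝ) =>
        chainP γ n (p.2 0) (fun j => p.2 j.succ)) := ih.comp h1
    have h3 : Measurable (fun p : ℝ × (Fin (n+1) → ℝ) => (min p.1 (p.2 0)) ^ (-γ)) := by
      measurability
    exact h3.mul h2

lemma chainP_nonneg (γ : ℝ) : ∀ (n : ℕ) (a : ℝ), 0 < a → ∀ u : Fin n → ℝ,
    (∀ j, 0 < u j) → 0 ≤ chainP γ n a u := by
  intro n
  induction n with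
  | zero => intro a ha u hu; exact Real.rpow_nonneg ha.le _
  | succ n ih =>
    intro a ha u hu
    exact mul_nonneg (Real.rpow_nonneg (le_min ha.le (hu 0).le) _)
      (ih (u 0) (hu 0) _ (fun j => hu j.succ))

lemma chainP_eq (γ : ℝ) : ∀ (n : ℕ) (hn : 1 ≤ n) (a : ℝ) (u : Fin n → ℝ),
    chainP γ n a u =
      (∏ j : Fin n,
        (min (if j.val = 0 then a
              else u ⟨j.val - 1, lt_of_le_of_lt (Nat.sub_le _ _) j.isLt⟩) (u j)) ^ (-γ))
        * (u ⟨n - 1, Nat.sub_one_lt_of_le hn le_rfl⟩) ^ (-γ) := by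
  intro n
  induction n with
  | zero => omega
  | succ n ih =>
    intro _ a u
    rcases Nat.eq_zero_or_pos n with hn0 | hn1
    · subst hn0
      simp [chainP, Fin.prod_univ_succ]
    · rw [Fin.prod_univ_succ]
      simp only [chainP, ih hn1 (u 0) (fun j => u j.succ)]
      have hterm : ∀ j : Fin n,
          (min (if (j.succ : Fin (n+1)).val = 0 then a
                else u ⟨(j.succ : Fin (n+1)).val - 1,
                  lt_of_le_of_lt (Nat.sub_le _ _) (j.succ : Fin (n+1)).isLt⟩)
            (u j.succ)) ^ (-γ)
          = (min (if j.val = 0 then u 0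
                else u (Fin.succ ⟨j.val - 1, lt_of_le_of_lt (Nat.sub_le _ _) j.isLt⟩))
              (u j.succ)) ^ (-γ) := by
        intro j
        congr 2
        rw [if_neg (by simp [Fin.val_succ])]
        split_ifs with h
        · congr 1
          ext
          simp [Fin.val_succ, h]
        · congr 1
          ext
          simp only [Fin.val_succ]
          omega
      have hend : u (Fin.succ (⟨n - 1, by omega⟩ : Fin n)) = u ⟨n + 1 - 1, by omega⟩ := by
        congr 1
        ext
        simp only [Fin.val_succ]
        omega
      rw [Finset.prod_congr rfl (fun j _ => hterm j)]
      simp only [Fin.val_zero, if_pos rfl, hend, if_true]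
      ring

lemma core_integral_bound (γ : ℝ) (hγ0 : 0 < γ) (hγ : γ < 1/2) (a : ℝ)
    (ha : a ∈ Set.Ioc (0:ℝ) 1) :
    ∫⁻ t in Set.Ioc (0:ℝ) 1, ENNReal.ofReal ((min a t) ^ (-γ) * t ^ (-γ)) ≤
      ENNReal.ofReal ((1/(1-2*γ) + 1/(1-γ)) * a ^ (-γ)) := by
  obtain ⟨ha0, ha1⟩ := ha
  have h2γ : (0:ℝ) < 1 - 2*γ := by linarith
  have h1γ : (0:ℝ) < 1 - γ := by linarith
  set f : ℝ → ℝ := fun t => (min a t) ^ (-γ) * t ^ (-γ) with hf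
  -- equalities on pieces
  have e1 : Set.EqOn f (fun t => t ^ (-(2*γ))) (Set.Ioc 0 a) := by
    intro t ht
    have ht0 : 0 < t := ht.1
    have : min a t = t := min_eq_right ht.2
    simp only [f, this]
    rw [← Real.rpow_add ht0]
    ring_nf
  have e2 : Set.EqOn f (fun t => a ^ (-γ) * t ^ (-γ)) (Set.Ioc a 1) := by
    intro t ht
    have : min a t = a := min_eq_left ht.1.le
    simp only [f, this]
  -- integrability
  have i1 : IntegrableOn (fun t : ℝ => t ^ (-(2*γ))) (Set.Ioc 0 a) := by
    have := intervalIntegral.intervalIntegrable_rpow' (a := 0) (b := a) (r := -(2*γ)) (by linarith)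
    rwa [intervalIntegrable_iff_integrableOn_Ioc_of_le ha0.le] at this
  have i2 : IntegrableOn (fun t : ℝ => a ^ (-γ) * t ^ (-γ)) (Set.Ioc a 1) := by
    have := (intervalIntegral.intervalIntegrable_rpow' (a := a) (b := 1) (r := -γ) (by linarith)).const_mul
      (a ^ (-γ))
    rwa [intervalIntegrable_iff_integrableOn_Ioc_of_le ha1] at this
  have if1 : IntegrableOn f (Set.Ioc 0 a) := i1.congr_fun e1.symm measurableSet_Ioc
  have if2 : IntegrableOn f (Set.Ioc a 1) := i2.congr_fun e2.symm measurableSet_Ioc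
  have hsplit : Set.Ioc (0:ℝ) 1 = Set.Ioc 0 a ∪ Set.Ioc a 1 :=
    (Set.Ioc_union_Ioc_eq_Ioc ha0.le ha1).symm
  have hfi : IntegrableOn f (Set.Ioc (0:ℝ) 1) := by
    rw [hsplit]; exact if1.union if2
  -- compute the integral
  have c1 : ∫ t in Set.Ioc (0:ℝ) a, f t = a ^ (1-2*γ) / (1-2*γ) := by
    rw [setIntegral_congr_fun measurableSet_Ioc e1,
      ← intervalIntegral.integral_of_le ha0.le,
      integral_rpow (Or.inl (by linarith))]
    rw [Real.zero_rpow (by linarith)]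
    norm_num
    ring_nf
  have c2 : ∫ t in Set.Ioc a 1, f t = a ^ (-γ) * ((1 - a ^ (1-γ)) / (1-γ)) := by
    rw [setIntegral_congr_fun measurableSet_Ioc e2, integral_const_mul,
      ← intervalIntegral.integral_of_le ha1,
      integral_rpow (Or.inl (by linarith))]
    rw [Real.one_rpow]
    ring_nf
  have hIeq : ∫ t in Set.Ioc (0:ℝ) 1, f t
      = a ^ (1-2*γ) / (1-2*γ) + a ^ (-γ) * ((1 - a ^ (1-γ)) / (1-γ)) := by
    rw [hsplit, setIntegral_union (Set.Ioc_disjoint_Ioc_of_le le_rfl) measurableSet_Ioc if1 if2, c1, c2]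
  -- the bound
  have hb0 : 0 < a ^ (1-γ) := Real.rpow_pos_of_pos ha0 _
  have hb1 : a ^ (1-γ) ≤ 1 := Real.rpow_le_one ha0.le ha1 (by linarith)
  have hx : 0 < a ^ (-γ) := Real.rpow_pos_of_pos ha0 _
  have ha2γ : a ^ (1-2*γ) = a ^ (-γ) * a ^ (1-γ) := by
    rw [← Real.rpow_add ha0]; ring_nf
  have hIb : ∫ t in Set.Ioc (0:ℝ) 1, f t ≤ (1/(1-2*γ) + 1/(1-γ)) * a ^ (-γ) := by
    rw [hIeq, ha2γ]
    have h1 : a ^ (-γ) * a ^ (1-γ) / (1-2*γ) ≤ a ^ (-γ) / (1-2*γ) :=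
      (div_le_div_iff_of_pos_right h2γ).mpr (by nlinarith)
    have h2 : a ^ (-γ) * ((1 - a ^ (1-γ)) / (1-γ)) ≤ a ^ (-γ) / (1-γ) := by
      rw [mul_div_assoc']
      exact (div_le_div_iff_of_pos_right h1γ).mpr (by nlinarith)
    calc a ^ (-γ) * a ^ (1-γ) / (1-2*γ) + a ^ (-γ) * ((1 - a ^ (1-γ)) / (1-γ))
        ≤ a ^ (-γ) / (1-2*γ) + a ^ (-γ) / (1-γ) := add_le_add h1 h2
      _ = (1/(1-2*γ) + 1/(1-γ)) * a ^ (-γ) := by ring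
  -- nonnegativity a.e.
  have hnn : 0 ≤ᵐ[volume.restrict (Set.Ioc (0:ℝ) 1)] f := by
    filter_upwards [ae_restrict_mem measurableSet_Ioc] with t ht
    exact mul_nonneg (Real.rpow_nonneg (le_min ha0.le ht.1.le) _)
      (Real.rpow_nonneg ht.1.le _)
  calc ∫⁻ t in Set.Ioc (0:ℝ) 1, ENNReal.ofReal (f t)
      = ENNReal.ofReal (∫ t in Set.Ioc (0:ℝ) 1, f t) :=
        (ofReal_integral_eq_lintegral_ofReal hfi hnn).symm
    _ ≤ ENNReal.ofReal ((1/(1-2*γ) + 1/(1-γ)) * a ^ (-γ)) := ENNReal.ofReal_le_ofReal hIb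

lemma main_bound (γ : ℝ) (hγ0 : 0 < γ) (hγ : γ < 1/2) :
    ∀ (n : ℕ) (a : ℝ), a ∈ Set.Ioc (0:ℝ) 1 →
    (∫⁻ u, ENNReal.ofReal (chainP γ n a u)
        ∂(Measure.pi fun _ : Fin n => (volume : Measure ℝ).restrict (Set.Ioc 0 1)))
      ≤ ENNReal.ofReal ((1/(1-2*γ) + 1/(1-γ)) ^ n * a ^ (-γ)) := by
  have hC : (0:ℝ) < 1/(1-2*γ) + 1/(1-γ) := by
    have h2γ : (0:ℝ) < 1 - 2*γ := by linarith
    have h1γ : (0:ℝ) < 1 - γ := by linarith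
    positivity
  haveI : IsProbabilityMeasure ((volume : Measure ℝ).restrict (Set.Ioc 0 1)) := by
    constructor
    simp [Real.volume_Ioc]
  intro n
  induction n with
  | zero =>
    intro a _
    simp [chainP, lintegral_const]
  | succ n ih =>
    intro a ha
    set ν := (volume : Measure ℝ).restrict (Set.Ioc (0:ℝ) 1) with hν
    set C := 1/(1-2*γ) + 1/(1-γ) with hCdef
    set e := MeasurableEquiv.piFinSuccAbove (fun _ : Fin (n+1) => ℝ) 0 with he
    have hMP := measurePreserving_piFinSuccAbove (fun _ : Fin (n+1) => ν) 0
    set g : ℝ × (Fin n → ℝ) → ENNReal :=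
      fun p => ENNReal.ofReal ((min a p.1) ^ (-γ) * chainP γ n p.1 p.2) with hg
    have hgm : Measurable g := by
      apply Measurable.ennreal_ofReal
      exact ((measurable_const.min measurable_fst).pow_const (-γ)).mul (chainP_measurable γ n)
    have hkey : ∀ u : Fin (n+1) → ℝ, ENNReal.ofReal (chainP γ (n+1) a u) = g (e u) := by
      intro u
      simp only [hg, he, MeasurableEquiv.piFinSuccAbove_apply, chainP, Fin.succAbove_zero]
      rfl
    have hCn : (0:ℝ) ≤ C ^ n := by positivity
    calc (∫⁻ u, ENNReal.ofReal (chainP γ (n+1) a u) ∂(Measure.pi fun _ : Fin (n+1) => ν))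
        = ∫⁻ u, g (e u) ∂(Measure.pi fun _ : Fin (n+1) => ν) := by simp_rw [hkey]
      _ = ∫⁻ p, g p ∂(ν.prod (Measure.pi fun _ : Fin n => ν)) := hMP.lintegral_comp hgm
      _ = ∫⁻ t, (∫⁻ v, g (t, v) ∂(Measure.pi fun _ : Fin n => ν)) ∂ν :=
          lintegral_prod _ hgm.aemeasurable
      _ ≤ ∫⁻ t, ENNReal.ofReal (C ^ n) * ENNReal.ofReal ((min a t) ^ (-γ) * t ^ (-γ)) ∂ν := by
          apply lintegral_mono_ae
          filter_upwards [ae_restrict_mem measurableSet_Ioc] with t ht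
          have hmt : (0:ℝ) ≤ (min a t) ^ (-γ) :=
            Real.rpow_nonneg (le_min ha.1.le ht.1.le) _
          calc (∫⁻ v, g (t, v) ∂(Measure.pi fun _ : Fin n => ν))
              = ENNReal.ofReal ((min a t) ^ (-γ)) *
                  ∫⁻ v, ENNReal.ofReal (chainP γ n t v)
                    ∂(Measure.pi fun _ : Fin n => ν) := by
                simp_rw [hg, ENNReal.ofReal_mul hmt]
                exact lintegral_const_mul' _ _ ENNReal.ofReal_ne_top
            _ ≤ ENNReal.ofReal ((min a t) ^ (-γ)) * ENNReal.ofReal (C ^ n * t ^ (-γ)) :=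
                mul_le_mul_right (ih t ht) _
            _ = ENNReal.ofReal (C ^ n) * ENNReal.ofReal ((min a t) ^ (-γ) * t ^ (-γ)) := by
                rw [← ENNReal.ofReal_mul hmt, ← ENNReal.ofReal_mul hCn]
                congr 1
                ring
      _ = ENNReal.ofReal (C ^ n) *
            ∫⁻ t, ENNReal.ofReal ((min a t) ^ (-γ) * t ^ (-γ)) ∂ν :=
          lintegral_const_mul' _ _ ENNReal.ofReal_ne_top
      _ ≤ ENNReal.ofReal (C ^ n) * ENNReal.ofReal (C * a ^ (-γ)) :=
          mul_le_mul_right (core_integral_bound γ hγ0 hγ a ha) _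
      _ = ENNReal.ofReal (C ^ (n+1) * a ^ (-γ)) := by
          rw [← ENNReal.ofReal_mul hCn]
          congr 1
          ring

lemma pi_volume_restrict (k : ℕ) :
    ((volume : Measure (Fin k → ℝ))).restrict (Set.univ.pi fun _ : Fin k => Set.Ioc (0:ℝ) 1)
      = Measure.pi fun _ : Fin k => (volume : Measure ℝ).restrict (Set.Ioc 0 1) := by
  rw [volume_pi]
  refine (Measure.pi_eq fun s hs => ?_).symm
  rw [Measure.restrict_apply (MeasurableSet.univ_pi hs), ← Set.pi_inter_distrib,
    Measure.pi_pi]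
  simp_rw [Measure.restrict_apply (hs _)]

/-- For 0 < γ < 1/2 and u₀ ∈ (0,1), for every k ≥ 1 the iterated integral
∫₀¹ du₁ ⋯ ∫₀¹ du_k (∏_{j=1}^k (u_{j-1} ∧ u_j)^{-γ}) u_k^{-γ}
is at most (1/(1-2γ)+1/(1-γ))^{k} u₀^{-γ}. -/
theorem whole_path_mark_integral_bound_with_endpoint (γ : ℝ) (hγ0 : 0 < γ) (hγ : γ < 1/2)
    (u₀ : ℝ) (hu₀ : u₀ ∈ Set.Ioo (0:ℝ) 1) (k : ℕ) (hk : 1 ≤ k) :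
    (∫ u : Fin k → ℝ in Set.univ.pi fun _ : Fin k => Set.Ioc (0:ℝ) 1,
      (∏ j : Fin k,
        (min (if j.val = 0 then u₀
              else u ⟨j.val - 1, lt_of_le_of_lt (Nat.sub_le _ _) j.isLt⟩) (u j)) ^ (-γ))
        * (u ⟨k - 1, by omega⟩) ^ (-γ))
      ≤ (1/(1-2*γ) + 1/(1-γ)) ^ k * u₀ ^ (-γ) := by
  have h2γ : (0:ℝ) < 1 - 2*γ := by linarith
  have h1γ : (0:ℝ) < 1 - γ := by linarith
  have hu₀' : u₀ ∈ Set.Ioc (0:ℝ) 1 := ⟨hu₀.1, hu₀.2.le⟩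
  have heq : ∀ u : Fin k → ℝ,
      (∏ j : Fin k,
        (min (if j.val = 0 then u₀
              else u ⟨j.val - 1, lt_of_le_of_lt (Nat.sub_le _ _) j.isLt⟩) (u j)) ^ (-γ))
        * (u ⟨k - 1, by omega⟩) ^ (-γ) = chainP γ k u₀ u := by
    intro u
    exact (chainP_eq γ k hk u₀ u).symm
  simp_rw [heq]
  set S : Set (Fin k → ℝ) := Set.univ.pi fun _ : Fin k => Set.Ioc (0:ℝ) 1 with hS
  have hSm : MeasurableSet S := MeasurableSet.univ_pi fun _ => measurableSet_Ioc
  have hnn : 0 ≤ᵐ[(volume : Measure (Fin k → ℝ)).restrict S] chainP γ k u₀ := by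
    filter_upwards [ae_restrict_mem hSm] with u hu
    exact chainP_nonneg γ k u₀ hu₀.1 u fun j => (hu j (Set.mem_univ j)).1
  have hmeas : Measurable (chainP γ k u₀) :=
    (chainP_measurable γ k).comp (measurable_const.prodMk measurable_id)
  rw [integral_eq_lintegral_of_nonneg_ae hnn hmeas.aestronglyMeasurable]
  rw [pi_volume_restrict k]
  have hmain := main_bound γ hγ0 hγ k u₀ hu₀'
  have hfin : ENNReal.ofReal ((1/(1-2*γ) + 1/(1-γ)) ^ k * u₀ ^ (-γ)) ≠ ⊤ :=
    ENNReal.ofReal_ne_top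
  calc (∫⁻ u, ENNReal.ofReal (chainP γ k u₀ u)
          ∂(Measure.pi fun _ : Fin k => (volume : Measure ℝ).restrict (Set.Ioc 0 1))).toReal
      ≤ (ENNReal.ofReal ((1/(1-2*γ) + 1/(1-γ)) ^ k * u₀ ^ (-γ))).toReal :=
        ENNReal.toReal_mono hfin hmain
    _ = (1/(1-2*γ) + 1/(1-γ)) ^ k * u₀ ^ (-γ) := by
        rw [ENNReal.toReal_ofReal]
        have hC0 : (0:ℝ) < 1/(1-2*γ) + 1/(1-γ) :=
          add_pos (one_div_pos.mpr h2γ) (one_div_pos.mpr h1γ)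
        exact le_of_lt (mul_pos (pow_pos hC0 k) (Real.rpow_pos_of_pos hu₀.1 _))
end

section
/- Let δ > 1 and 0 < γ < 1/(δ+1). Then for every k ≥ 2 and every index h with 1 ≤ h ≤ k-1, the iterated integral over the region 1 > u₀ > u₁ > ⋯ > u_{h-1} > 0, 0 < u_h < u_{h-1}, and u_h < u_{h+1} < ⋯ < u_k < 1 of the integrand (∏_{i=0}^{h-2} u_i^{-γ-γ/δ}) · u_{h-1}^{-2γ} · u_h^{-γ-γδ} · (∏_{i=h+1}^{k} u_i^{-γ-γ/δ}) is at most (1/((1-2γ)(1-γ(δ+1)))) · (δ/(δ-γ(δ+1)))^k. -/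
open MeasureTheory

/-- for δ > 1 and 0 < γ < 1/(δ+1), k ≥ 2 and 1 ≤ h ≤ k-1, the integral
over the region 1 > u₀ > ⋯ > u_{h-1} > u_h > 0 and u_h < u_{h+1} < ⋯ < u_k < 1 of
(∏_{i=0}^{h-2} u_i^{-γ-γ/δ}) u_{h-1}^{-2γ} u_h^{-γ-γδ} (∏_{i=h+1}^k u_i^{-γ-γ/δ})
is at most (1/((1-2γ)(1-γ(δ+1)))) (δ/(δ-γ(δ+1)))^k. -/
theorem skeleton_mark_integral_bound (δ γ : ℝ) (hδ : 1 < δ) (hγ0 : 0 < γ)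
    (hγ : γ < 1 / (δ + 1)) (k h : ℕ) (hk : 2 ≤ k) (hh1 : 1 ≤ h) (hhk : h ≤ k - 1) :
    (∫ u : Fin (k+1) → ℝ in
        {u : Fin (k+1) → ℝ |
          u ⟨0, by omega⟩ < 1 ∧ 0 < u ⟨h, by omega⟩ ∧ u (Fin.last k) < 1 ∧
          ∀ i : Fin k, (i.val < h → u i.succ < u i.castSucc)
            ∧ (h ≤ i.val → u i.castSucc < u i.succ)},
      ∏ i : Fin (k+1),
        (u i) ^ (if i.val = h - 1 then -(2*γ)
                 else if i.val = h then -(γ + γ*δ) else -(γ + γ/δ)))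
      ≤ (1 / ((1 - 2*γ) * (1 - γ*(δ+1)))) * (δ / (δ - γ*(δ+1))) ^ k := by
  have hδ0 : (0:ℝ) < δ := by linarith
  have hδ1 : (0:ℝ) < δ + 1 := by linarith
  have hγδ1 : γ * (δ + 1) < 1 := by
    rw [div_eq_inv_mul, mul_one] at hγ
    calc γ * (δ + 1) < (δ+1)⁻¹ * (δ+1) := by
          exact mul_lt_mul_of_pos_right hγ hδ1
      _ = 1 := inv_mul_cancel₀ (ne_of_gt hδ1)
  have h2γ : 2 * γ < 1 := by nlinarith
  have hγdiv : γ + γ / δ < 1 := by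
    have : γ / δ < γ * δ := by
      rw [div_lt_iff₀ hδ0]
      nlinarith [mul_pos (mul_pos hγ0 (sub_pos.mpr hδ)) hδ1]
    nlinarith
  set p : Fin (k+1) → ℝ := fun i => if i.val = h - 1 then -(2*γ)
    else if i.val = h then -(γ + γ*δ) else -(γ + γ/δ) with hp_def
  have hp : ∀ i, -1 < p i := by
    intro i
    simp only [hp_def]
    split_ifs with h1 h2
    · linarith
    · nlinarith
    · linarith
  set g : Fin (k+1) → ℝ → ℝ := fun i => (Set.Ioo (0:ℝ) 1).indicator (fun x => x ^ p i)
    with hg_def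
  have hgint : ∀ i, Integrable (g i) := by
    intro i
    rw [hg_def]
    rw [integrable_indicator_iff measurableSet_Ioo]
    have h1 : IntervalIntegrable (fun x : ℝ => x ^ p i) volume 0 1 :=
      intervalIntegral.intervalIntegrable_rpow' (hp i)
    rw [intervalIntegrable_iff_integrableOn_Ioo_of_le (by norm_num)] at h1
    exact h1
  have hgval : ∀ i, ∫ x, g i x = 1 / (p i + 1) := by
    intro i
    rw [hg_def]
    simp only
    rw [integral_indicator measurableSet_Ioo, ← integral_Ioc_eq_integral_Ioo,
      ← intervalIntegral.integral_of_le (by norm_num : (0:ℝ) ≤ 1)]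
    rw [integral_rpow (Or.inl (hp i))]
    rw [Real.one_rpow, Real.zero_rpow (by linarith [hp i])]
    ring
  set F : (Fin (k+1) → ℝ) → ℝ := fun u => ∏ i, g i (u i) with hF_def
  have hFint : Integrable F := Integrable.fintype_prod hgint
  set t : Set (Fin (k+1) → ℝ) := Set.pi Set.univ (fun _ => Set.Ioo (0:ℝ) 1) with ht_def
  have htm : MeasurableSet t := MeasurableSet.univ_pi (fun _ => measurableSet_Ioo)
  have hind : t.indicator (fun u => ∏ i, (u i) ^ p i) = F := by
    funext u
    by_cases hu : u ∈ t
    · rw [Set.indicator_of_mem hu, hF_def]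
      exact Finset.prod_congr rfl fun i _ =>
        (Set.indicator_of_mem (hu i (Set.mem_univ i)) (fun x => x ^ p i)).symm
    · rw [Set.indicator_of_notMem hu, hF_def]
      rw [Set.mem_univ_pi] at hu
      push_neg at hu
      obtain ⟨i, hi⟩ := hu
      exact (Finset.prod_eq_zero (Finset.mem_univ i)
        (Set.indicator_of_notMem hi _)).symm
  have hintOn : IntegrableOn (fun u : Fin (k+1) → ℝ => ∏ i, (u i) ^ p i) t := by
    have h2 := hFint
    rw [← hind] at h2
    exact (integrable_indicator_iff htm).1 h2
  -- the region is contained in t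
  set S : Set (Fin (k+1) → ℝ) :=
    {u : Fin (k+1) → ℝ |
      u ⟨0, by omega⟩ < 1 ∧ 0 < u ⟨h, by omega⟩ ∧ u (Fin.last k) < 1 ∧
      ∀ i : Fin k, (i.val < h → u i.succ < u i.castSucc)
        ∧ (h ≤ i.val → u i.castSucc < u i.succ)} with hS_def
  have hsub : S ⊆ t := by
    intro u hu
    obtain ⟨h0, hh, hlast, hmono⟩ := hu
    have dec : ∀ m (hm : m < h), u ⟨m+1, by omega⟩ < u ⟨m, by omega⟩ := by
      intro m hm
      exact (hmono ⟨m, by omega⟩).1 hm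
    have inc : ∀ m (hm1 : h ≤ m) (hm2 : m < k), u ⟨m, by omega⟩ < u ⟨m+1, by omega⟩ := by
      intro m hm1 hm2
      exact (hmono ⟨m, hm2⟩).2 hm1
    have ledec : ∀ b (hb : b ≤ h), ∀ a (hab : a ≤ b), u ⟨b, by omega⟩ ≤ u ⟨a, by omega⟩ := by
      intro b
      induction b with
      | zero =>
        intro _ a hab
        have ha0 : a = 0 := by omega
        subst ha0
        exact le_refl _
      | succ b ih =>
        intro hb a hab
        rcases Nat.eq_or_lt_of_le hab with heq | hlt
        · subst heq; exact le_refl _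
        · exact le_trans (le_of_lt (dec b (by omega))) (ih (by omega) a (by omega))
    have leinc : ∀ b (hb : b ≤ k), ∀ a (hab : a ≤ b) (ha : h ≤ a),
        u ⟨a, by omega⟩ ≤ u ⟨b, by omega⟩ := by
      intro b
      induction b with
      | zero =>
        intro _ a hab _
        have ha0 : a = 0 := by omega
        subst ha0
        exact le_refl _
      | succ b ih =>
        intro hb a hab ha
        rcases Nat.eq_or_lt_of_le hab with heq | hlt
        · subst heq; exact le_refl _
        · exact le_trans (ih (by omega) a (by omega) ha) (le_of_lt (inc b (by omega) (by omega)))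
    intro i _
    constructor
    · -- 0 < u i
      rcases le_or_gt i.val h with hih | hih
      · calc (0:ℝ) < u ⟨h, by omega⟩ := hh
          _ ≤ u ⟨i.val, i.isLt⟩ := ledec h (le_refl h) i.val hih
          _ = u i := by congr
      · calc (0:ℝ) < u ⟨h, by omega⟩ := hh
          _ ≤ u ⟨i.val, i.isLt⟩ := leinc i.val (by omega) h (by omega) (le_refl h)
          _ = u i := by congr
    · -- u i < 1
      rcases le_or_gt i.val h with hih | hih
      · calc u i = u ⟨i.val, i.isLt⟩ := by congr
          _ ≤ u ⟨0, by omega⟩ := ledec i.val (by omega) 0 (by omega)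
          _ < 1 := h0
      · calc u i = u ⟨i.val, i.isLt⟩ := by congr
          _ ≤ u ⟨k, by omega⟩ := leinc k (le_refl k) i.val (by omega) (by omega)
          _ = u (Fin.last k) := by congr
          _ < 1 := hlast
  have hnn : 0 ≤ᵐ[volume.restrict t] (fun u : Fin (k+1) → ℝ => ∏ i, (u i) ^ p i) := by
    have : ∀ᵐ u ∂(volume.restrict t), 0 ≤ ∏ i : Fin (k+1), (u i) ^ p i := by
      rw [ae_restrict_iff' htm]
      filter_upwards with u hu
      exact Finset.prod_nonneg fun i _ =>
        Real.rpow_nonneg (le_of_lt (hu i (Set.mem_univ i)).1) _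
    exact this
  have step1 : (∫ u in S, ∏ i, (u i) ^ p i) ≤ ∫ u in t, ∏ i, (u i) ^ p i :=
    setIntegral_mono_set hintOn hnn (HasSubset.Subset.eventuallyLE hsub)
  have step2 : (∫ u in t, ∏ i, (u i) ^ p i) = ∏ i, (1 / (p i + 1)) := by
    rw [← integral_indicator htm, hind, hF_def,
      integral_fintype_prod_volume_eq_prod g]
    exact Finset.prod_congr rfl fun i _ => hgval i
  -- compute the product
  have hprod : (∏ i : Fin (k+1), (1 / (p i + 1)))
      = (1 / (1 - 2*γ)) * ((1 / (1 - γ*(δ+1))) * (1 / (1 - (γ + γ/δ))) ^ (k-1)) := by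
    have : (∏ i : Fin (k+1), (1 / (p i + 1)))
        = ∏ m ∈ Finset.range (k+1), (1 / ((if m = h - 1 then -(2*γ)
            else if m = h then -(γ + γ*δ) else -(γ + γ/δ)) + 1)) := by
      rw [Finset.prod_range fun m => (1 / ((if m = h - 1 then -(2*γ)
            else if m = h then -(γ + γ*δ) else -(γ + γ/δ)) + 1))]
    rw [this]
    have hm1 : h - 1 ∈ Finset.range (k+1) := Finset.mem_range.2 (by omega)
    rw [← Finset.mul_prod_erase _ _ hm1]
    have hm2 : h ∈ (Finset.range (k+1)).erase (h-1) :=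
      Finset.mem_erase.2 ⟨by omega, Finset.mem_range.2 (by omega)⟩
    rw [← Finset.mul_prod_erase _ _ hm2]
    have e1 : (1 / ((if h - 1 = h - 1 then -(2*γ)
        else if h - 1 = h then -(γ + γ*δ) else -(γ + γ/δ)) + 1)) = 1 / (1 - 2*γ) := by
      rw [if_pos rfl]; ring_nf
    have e2 : (1 / ((if h = h - 1 then -(2*γ)
        else if h = h then -(γ + γ*δ) else -(γ + γ/δ)) + 1)) = 1 / (1 - γ*(δ+1)) := by
      rw [if_neg (by omega), if_pos rfl]; ring_nf
    rw [e1, e2]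
    have e3' : ∀ m ∈ ((Finset.range (k+1)).erase (h-1)).erase h,
        (1 / ((if m = h - 1 then -(2*γ)
          else if m = h then -(γ + γ*δ) else -(γ + γ/δ)) + 1))
        = 1 / (1 - (γ + γ/δ)) := by
      intro m hm
      rw [Finset.mem_erase] at hm
      obtain ⟨hne2, hm'⟩ := hm
      rw [Finset.mem_erase] at hm'
      rw [if_neg hm'.1, if_neg hne2]
      ring_nf
    rw [Finset.prod_congr rfl e3', Finset.prod_const, Finset.card_erase_of_mem hm2,
      Finset.card_erase_of_mem hm1, Finset.card_range]
    congr 1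
  -- final arithmetic
  have hpos1 : (0:ℝ) < 1 - 2*γ := by linarith
  have hpos2 : (0:ℝ) < 1 - γ*(δ+1) := by linarith
  have hpos3 : (0:ℝ) < 1 - (γ + γ/δ) := by linarith
  have hc : 1 / (1 - (γ + γ/δ)) = δ / (δ - γ*(δ+1)) := by
    rw [div_eq_div_iff hpos3.ne' (by nlinarith : (0:ℝ) < δ - γ*(δ+1)).ne']
    field_simp
  have hB1 : (1:ℝ) ≤ δ / (δ - γ*(δ+1)) := by
    rw [le_div_iff₀ (by nlinarith)]
    nlinarith
  calc (∫ u in S, ∏ i, (u i) ^ p i)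
      ≤ ∫ u in t, ∏ i, (u i) ^ p i := step1
    _ = ∏ i : Fin (k+1), (1 / (p i + 1)) := step2
    _ = (1 / (1 - 2*γ)) * ((1 / (1 - γ*(δ+1))) * (1 / (1 - (γ + γ/δ))) ^ (k-1)) := hprod
    _ = (1 / ((1 - 2*γ) * (1 - γ*(δ+1)))) * (δ / (δ - γ*(δ+1))) ^ (k-1) := by
        rw [hc, ← mul_assoc, div_mul_div_comm, one_mul]
    _ ≤ (1 / ((1 - 2*γ) * (1 - γ*(δ+1)))) * (δ / (δ - γ*(δ+1))) ^ k := by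
        apply mul_le_mul_of_nonneg_left
        · exact pow_le_pow_right₀ (by linarith) (by omega)
        · positivity
end

section
/- Let δ > 1 and γ > 0 with γ(δ+1) > 1 and γ + γ/δ < 1, let s ∈ (0,1), and let k ≥ 1. Then the nested integral ∫_s^1 du₀ ∫_s^{u₀} du₁ ⋯ ∫_s^{u_{k-1}} du_k, of u₀^{-γ/δ} (∏_{j=1}^{k-1} u_j^{-γ-γ/δ}) u_k^{-γδ-γ}, is at most (1/(γ(δ+1)-1)) · (δ/(δ-γ(δ+1)))^{k-1} · (δ/(δ-γ)) · s^{1-γ(δ+1)}. -/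
open MeasureTheory

lemma aux_1d_val (s r : ℝ) (hs : 0 < s) (hs1 : s < 1) (hr : r ≠ -1) :
    ∫ x in Set.Ioo s 1, x ^ r = (1 - s ^ (r+1)) / (r+1) := by
  rw [← MeasureTheory.integral_Ioc_eq_integral_Ioo, ← intervalIntegral.integral_of_le hs1.le,
    integral_rpow (Or.inr ⟨hr, Set.notMem_uIcc_of_lt hs one_pos⟩)]
  rw [Real.one_rpow]

lemma aux_1d_int (s r : ℝ) (hs : 0 < s) :
    IntegrableOn (fun x : ℝ => x ^ r) (Set.Ioo s 1) :=
  ((intervalIntegral.intervalIntegrable_rpow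
    (Or.inr (Set.notMem_uIcc_of_lt hs one_pos))).1).mono_set Set.Ioo_subset_Ioc_self

/-- for δ > 1, γ > 0 with γ(δ+1) > 1 and γ + γ/δ < 1, s ∈ (0,1), k ≥ 1,
the nested integral ∫_s^1 du₀ ∫_s^{u₀} du₁ ⋯ ∫_s^{u_{k-1}} du_k of
u₀^{-γ/δ} (∏_{j=1}^{k-1} u_j^{-γ-γ/δ}) u_k^{-γδ-γ} is at most
(1/(γ(δ+1)-1)) (δ/(δ-γ(δ+1)))^{k-1} (δ/(δ-γ)) s^{1-γ(δ+1)}. -/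
theorem decreasing_skeleton_integral_bound (δ γ s : ℝ) (hδ : 1 < δ) (hγ0 : 0 < γ)
    (h1 : 1 < γ * (δ + 1)) (h2 : γ + γ/δ < 1) (hs : 0 < s) (hs1 : s < 1)
    (k : ℕ) (hk : 1 ≤ k) :
    (∫ u : Fin (k+1) → ℝ in
        {u : Fin (k+1) → ℝ |
          (∀ i, s < u i) ∧ u 0 < 1 ∧ ∀ i : Fin k, u i.succ < u i.castSucc},
      ∏ i : Fin (k+1),
        (u i) ^ (if i.val = 0 then -(γ/δ)
                 else if i.val = k then -(γ*δ + γ) else -(γ + γ/δ)))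
      ≤ (1 / (γ*(δ+1) - 1)) * (δ / (δ - γ*(δ+1))) ^ (k-1) * (δ / (δ - γ)) *
          s ^ (1 - γ*(δ+1)) := by
  have hδ0 : (0:ℝ) < δ := lt_trans one_pos hδ
  have hγδpos : 0 < γ / δ := div_pos hγ0 hδ0
  have hγδ1 : γ / δ < 1 := by linarith
  have hδγ : 0 < δ - γ := by
    have := (div_lt_one hδ0).mp hγδ1; linarith
  have hδγδ : 0 < δ - γ*(δ+1) := by
    have h2' : (γ + γ/δ) * δ < 1 * δ := mul_lt_mul_of_pos_right h2 hδ0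
    have hγδδ : γ/δ*δ = γ := div_mul_cancel₀ γ (ne_of_gt hδ0)
    nlinarith
  have hc1 : 0 < γ*(δ+1) - 1 := by linarith
  set A := Set.Ioo s (1:ℝ) with hA
  set e : Fin (k+1) → ℝ := fun i =>
    if i.val = 0 then -(γ/δ) else if i.val = k then -(γ*δ + γ) else -(γ + γ/δ) with he
  set F : (Fin (k+1) → ℝ) → ℝ := fun u => ∏ i, (u i) ^ (e i) with hF
  set D : Set (Fin (k+1) → ℝ) :=
    {u : Fin (k+1) → ℝ |
      (∀ i, s < u i) ∧ u 0 < 1 ∧ ∀ i : Fin k, u i.succ < u i.castSucc} with hD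
  set box : Set (Fin (k+1) → ℝ) := Set.pi Set.univ (fun _ => A) with hbox
  set g : Fin (k+1) → ℝ → ℝ := fun i => A.indicator (fun x : ℝ => x ^ e i) with hg
  have hmeasA : MeasurableSet A := measurableSet_Ioo
  have hmeasbox : MeasurableSet box := MeasurableSet.univ_pi (fun _ => measurableSet_Ioo)
  have hpoint : box.indicator F = fun u => ∏ i, g i (u i) := by
    funext u
    by_cases h : u ∈ box
    · rw [Set.indicator_of_mem h]
      exact Finset.prod_congr rfl fun i _ =>
        (Set.indicator_of_mem (h i (Set.mem_univ i)) (fun x => x ^ e i)).symm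
    · rw [Set.indicator_of_notMem h]
      rw [hbox, Set.mem_univ_pi] at h
      push_neg at h
      obtain ⟨i, hi⟩ := h
      exact (Finset.prod_eq_zero (Finset.mem_univ i)
        (by rw [hg]; exact Set.indicator_of_notMem hi _)).symm
  have hgint : ∀ i, Integrable (g i) := fun i =>
    (integrable_indicator_iff hmeasA).mpr (aux_1d_int s (e i) hs)
  have hFint : IntegrableOn F box := by
    refine (integrable_indicator_iff hmeasbox).mp ?_
    rw [hpoint]
    exact Integrable.fintype_prod (fun i => hgint i)
  have hsub : D ⊆ box := by
    rintro u ⟨hlow, h0, hchain⟩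
    have key : ∀ n (hn : n < k+1), u ⟨n, hn⟩ < 1 := by
      intro n
      induction n with
      | zero => intro hn; simpa using h0
      | succ n ih =>
        intro hn
        have hnk : n < k := by omega
        have hc : u (Fin.succ ⟨n, hnk⟩) < u (Fin.castSucc ⟨n, hnk⟩) := hchain ⟨n, hnk⟩
        have h1' : u ⟨n+1, hn⟩ < u ⟨n, by omega⟩ := hc
        exact lt_trans h1' (ih (by omega))
    intro i _
    exact ⟨hlow i, by simpa [Fin.eta] using key i.val i.isLt⟩
  have hnn : 0 ≤ᵐ[volume.restrict box] F := by
    filter_upwards [self_mem_ae_restrict hmeasbox] with u hu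
    exact Finset.prod_nonneg fun i _ =>
      Real.rpow_nonneg (le_of_lt (hs.trans (hu i (Set.mem_univ i)).1)) _
  have step1 : (∫ u in D, F u) ≤ ∫ u in box, F u :=
    setIntegral_mono_set hFint hnn (HasSubset.Subset.eventuallyLE hsub)
  have step2 : (∫ u in box, F u) = ∏ i : Fin (k+1), ∫ x in A, x ^ e i := by
    rw [← integral_indicator hmeasbox, hpoint, MeasureTheory.volume_pi,
      MeasureTheory.integral_fintype_prod_eq_prod g]
    exact Finset.prod_congr rfl fun i _ => integral_indicator hmeasA
  set B : ℕ → ℝ := fun n =>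
    if n = 0 then δ/(δ-γ)
    else if n = k then s ^ (1-γ*(δ+1)) / (γ*(δ+1)-1) else δ/(δ-γ*(δ+1)) with hB
  have step3 : (∏ i : Fin (k+1), ∫ x in A, x ^ e i) ≤ ∏ i : Fin (k+1), B i.val := by
    refine Finset.prod_le_prod (fun i _ => ?_) (fun i _ => ?_)
    · exact setIntegral_nonneg hmeasA fun x hx =>
        Real.rpow_nonneg (le_of_lt (hs.trans hx.1)) _
    · by_cases hi0 : i.val = 0
      · have hei : e i = -(γ/δ) := by simp only [he]; rw [if_pos hi0]
        have hBi : B i.val = δ/(δ-γ) := by simp only [hB]; rw [if_pos hi0]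
        rw [hA, hei, hBi, aux_1d_val s _ hs hs1
          (by intro h; have := neg_injective h; linarith)]
        have hp : 0 < -(γ/δ)+1 := by linarith
        have hnum : 1 - s ^ (-(γ/δ)+1) ≤ 1 :=
          sub_le_self _ (Real.rpow_nonneg hs.le _)
        calc (1 - s ^ (-(γ/δ)+1)) / (-(γ/δ)+1) ≤ 1 / (-(γ/δ)+1) :=
              (div_le_div_iff_of_pos_right hp).mpr hnum
          _ = δ/(δ-γ) := by
              rw [show -(γ/δ)+1 = (δ-γ)/δ by field_simp <;> ring, one_div_div]
      · by_cases hik : i.val = k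
        · have hei : e i = -(γ*δ + γ) := by
            simp only [he]; rw [if_neg hi0, if_pos hik]
          have hBi : B i.val = s ^ (1-γ*(δ+1)) / (γ*(δ+1)-1) := by
            simp only [hB]; rw [if_neg hi0, if_pos hik]
          rw [hA, hei, hBi, aux_1d_val s _ hs hs1
            (by intro h; have := neg_injective h; linarith)]
          rw [show -(γ*δ+γ)+1 = 1-γ*(δ+1) by ring]
          set t := s ^ (1-γ*(δ+1)) with ht'
          have ht : 1 ≤ t :=
            Real.one_le_rpow_of_pos_of_le_one_of_nonpos hs hs1.le (by linarith)
          have heq : (1-t)/(1-γ*(δ+1)) = (t-1)/(γ*(δ+1)-1) := by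
            rw [show (1:ℝ)-γ*(δ+1) = -(γ*(δ+1)-1) by ring, div_neg, ← neg_div, neg_sub]
          rw [heq]
          exact (div_le_div_iff_of_pos_right hc1).mpr (by linarith)
        · have hei : e i = -(γ + γ/δ) := by
            simp only [he]; rw [if_neg hi0, if_neg hik]
          have hBi : B i.val = δ/(δ-γ*(δ+1)) := by
            simp only [hB]; rw [if_neg hi0, if_neg hik]
          rw [hA, hei, hBi, aux_1d_val s _ hs hs1
            (by intro h; have := neg_injective h; linarith)]
          have hp : 0 < -(γ+γ/δ)+1 := by linarith
          have hnum : 1 - s ^ (-(γ+γ/δ)+1) ≤ 1 :=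
            sub_le_self _ (Real.rpow_nonneg hs.le _)
          calc (1 - s ^ (-(γ+γ/δ)+1)) / (-(γ+γ/δ)+1) ≤ 1 / (-(γ+γ/δ)+1) :=
                (div_le_div_iff_of_pos_right hp).mpr hnum
            _ = δ/(δ-γ*(δ+1)) := by
                rw [show -(γ+γ/δ)+1 = (δ-γ*(δ+1))/δ by field_simp <;> ring, one_div_div]
  have step4 : (∏ i : Fin (k+1), B i.val)
      = (1 / (γ*(δ+1) - 1)) * (δ / (δ - γ*(δ+1))) ^ (k-1) * (δ / (δ - γ)) *
          s ^ (1 - γ*(δ+1)) := by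
    obtain ⟨m, rfl⟩ : ∃ m, k = m+1 := ⟨k-1, by omega⟩
    rw [Fin.prod_univ_eq_prod_range (fun n => B n) (m+2), Finset.prod_range_succ,
      Finset.prod_range_succ']
    have hmid : ∀ x ∈ Finset.range m, B (x+1) = δ/(δ-γ*(δ+1)) := by
      intro x hx
      rw [Finset.mem_range] at hx
      have a1 : x+1 ≠ 0 := by omega
      have a2 : x+1 ≠ m+1 := by omega
      simp [hB, a1, a2, (show x ≠ m by omega)]
    rw [Finset.prod_congr rfl hmid, Finset.prod_const, Finset.card_range]
    have hB0 : B 0 = δ/(δ-γ) := by simp [hB]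
    have hBk : B (m+1) = s ^ (1-γ*(δ+1)) / (γ*(δ+1)-1) := by
      have a1 : m+1 ≠ 0 := by omega
      simp [hB, a1]
    rw [hB0, hBk]
    simp only [Nat.add_sub_cancel]
    ring
  calc (∫ u in D, F u) ≤ ∫ u in box, F u := step1
    _ = ∏ i : Fin (k+1), ∫ x in A, x ^ e i := step2
    _ ≤ ∏ i : Fin (k+1), B i.val := step3
    _ = _ := step4
end
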